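/- A projectively resolving class of R-modules that is closed under countable direct sums is closed under direct summands. -/

import Mathlib

universe u

open LinearMap DirectSum

section Defs

variable (R : Type u) [CommRing R]

/-- `Ext¹_R(M, Q) = 0`, expressed by the splitting of all extensions of `M` by `Q`. -/
def Ext1Zero (M Q : Type u) [AddCommGroup M] [Module R M] [AddCommGroup Q] [Module R Q] :
    Prop :=
  ∀ (E : ModuleCat.{u} R) (i : Q →ₗ[R] E) (p : E →ₗ[R] M),
    Function.Injective i → Function.Surjective p → LinearMap.range i = LinearMap.ker p →
      ∃ s : M →ₗ[R] E, p ∘ₗ s = LinearMap.id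

/-- `Tor₁^R(M, N) = 0`, expressed via flat presentations of `N`:
for every surjection `p : F ↠ N` with `F` flat, `ker p ⊗ M → F ⊗ M` is injective. -/
def Tor1Zero (M N : Type u) [AddCommGroup M] [Module R M] [AddCommGroup N] [Module R N] :
    Prop :=
  ∀ (F : ModuleCat.{u} R), Module.Flat R F →
    ∀ p : F →ₗ[R] N, Function.Surjective p →
      Function.Injective (LinearMap.rTensor M (LinearMap.ker p).subtype)

/-- `M` is strongly Gorenstein projective: there is an exact complex
`⋯ → P → P → P → ⋯` with a single projective `P` and single differential `f`,
which stays exact under `Hom(-, Q)` for every projective `Q`, and `M ≅ Im f`. -/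
def IsSGProjective (M : Type u) [AddCommGroup M] [Module R M] : Prop :=
  ∃ P : ModuleCat.{u} R, Module.Projective R P ∧
    ∃ f : P →ₗ[R] P, f ∘ₗ f = 0 ∧ LinearMap.ker f = LinearMap.range f ∧
      Nonempty (M ≃ₗ[R] LinearMap.range f) ∧
      ∀ Q : ModuleCat.{u} R, Module.Projective R Q →
        ∀ g : P →ₗ[R] Q, g ∘ₗ f = 0 → ∃ h : P →ₗ[R] Q, g = h ∘ₗ f

/-- `M` is strongly Gorenstein flat: there is an exact complex
`⋯ → F → F → F → ⋯` with a single flat `F` and single differential `f`,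
which stays exact under `- ⊗ I` for every injective `I`, and `M ≅ Im f`. -/
def IsSGFlat (M : Type u) [AddCommGroup M] [Module R M] : Prop :=
  ∃ F : ModuleCat.{u} R, Module.Flat R F ∧
    ∃ f : F →ₗ[R] F, f ∘ₗ f = 0 ∧ LinearMap.ker f = LinearMap.range f ∧
      Nonempty (M ≃ₗ[R] LinearMap.range f) ∧
      ∀ I : ModuleCat.{u} R, Module.Injective R I →
        LinearMap.ker (LinearMap.rTensor I f) = LinearMap.range (LinearMap.rTensor I f)

/-- `M` is Gorenstein projective: it is a syzygy of a totally acyclic complex of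
projective modules. -/
def IsGProjective (M : Type u) [AddCommGroup M] [Module R M] : Prop :=
  ∃ (P : ℤ → ModuleCat.{u} R) (d : ∀ i : ℤ, P (i + 1) →ₗ[R] P i),
    (∀ i, Module.Projective R (P i)) ∧
    (∀ i, d i ∘ₗ d (i + 1) = 0) ∧
    (∀ i, LinearMap.ker (d i) = LinearMap.range (d (i + 1))) ∧
    Nonempty (M ≃ₗ[R] LinearMap.range (d 0)) ∧
    ∀ Q : ModuleCat.{u} R, Module.Projective R Q →
      ∀ (i : ℤ) (g : P (i + 1) →ₗ[R] Q), g ∘ₗ d (i + 1) = 0 →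
        ∃ h : P i →ₗ[R] Q, g = h ∘ₗ d i

/-- `M` is Gorenstein flat: it is a syzygy of an exact complex of flat modules
which stays exact under `- ⊗ I` for every injective `I`. -/
def IsGFlat (M : Type u) [AddCommGroup M] [Module R M] : Prop :=
  ∃ (F : ℤ → ModuleCat.{u} R) (d : ∀ i : ℤ, F (i + 1) →ₗ[R] F i),
    (∀ i, Module.Flat R (F i)) ∧
    (∀ i, d i ∘ₗ d (i + 1) = 0) ∧
    (∀ i, LinearMap.ker (d i) = LinearMap.range (d (i + 1))) ∧
    Nonempty (M ≃ₗ[R] LinearMap.range (d 0)) ∧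
    ∀ I : ModuleCat.{u} R, Module.Injective R I →
      ∀ i : ℤ, LinearMap.ker (LinearMap.rTensor I (d i)) =
        LinearMap.range (LinearMap.rTensor I (d (i + 1)))

/-- A class of `R`-modules is projectively resolving if it contains the projectives and,
in every short exact sequence `0 → A → B → C → 0` with `C` in the class, `A` is in the
class iff `B` is. -/
def ProjResolving (X : ModuleCat.{u} R → Prop) : Prop :=
  (∀ P : ModuleCat.{u} R, Module.Projective R P → X P) ∧
  ∀ (A B C : ModuleCat.{u} R) (i : A →ₗ[R] B) (p : B →ₗ[R] C),
    Function.Injective i → Function.Surjective p → LinearMap.range i = LinearMap.ker p →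
      X C → (X A ↔ X B)

/-- Gorenstein projective dimension at most `n`. -/
def GpdLE : ℕ → ModuleCat.{u} R → Prop
  | 0, M => IsGProjective R M
  | n + 1, M => ∃ (G : ModuleCat.{u} R) (p : G →ₗ[R] M),
      IsGProjective R G ∧ Function.Surjective p ∧ GpdLE n (ModuleCat.of R (LinearMap.ker p))

/-- Gorenstein flat dimension at most `n`. -/
def GfdLE : ℕ → ModuleCat.{u} R → Prop
  | 0, M => IsGFlat R M
  | n + 1, M => ∃ (G : ModuleCat.{u} R) (p : G →ₗ[R] M),
      IsGFlat R G ∧ Function.Surjective p ∧ GfdLE n (ModuleCat.of R (LinearMap.ker p))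

/-- Flat dimension at most `n`. -/
def FlatDimLE : ℕ → ModuleCat.{u} R → Prop
  | 0, M => Module.Flat R M
  | n + 1, M => ∃ (G : ModuleCat.{u} R) (p : G →ₗ[R] M),
      Module.Flat R G ∧ Function.Surjective p ∧ FlatDimLE n (ModuleCat.of R (LinearMap.ker p))

/-- Projective dimension at most `n`. -/
def ProjDimLE : ℕ → ModuleCat.{u} R → Prop
  | 0, M => Module.Projective R M
  | n + 1, M => ∃ (G : ModuleCat.{u} R) (p : G →ₗ[R] M),
      Module.Projective R G ∧ Function.Surjective p ∧
        ProjDimLE n (ModuleCat.of R (LinearMap.ker p))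

/-- `R` is a coherent ring: every finitely generated ideal is finitely presented. -/
def IsCoherent : Prop :=
  ∀ I : Ideal R, I.FG → Module.FinitePresentation R I

end Defs

/-- A projectively resolving class of `R`-modules (closed under isomorphisms,
as any class of modules is) that is closed under countable direct sums is closed under
direct summands. -/
theorem stmt5 (R : Type u) [CommRing R] (X : ModuleCat.{u} R → Prop)
    (hres : ProjResolving R X)
    (hiso : ∀ M N : ModuleCat.{u} R, (M ≃ₗ[R] N) → X M → X N)
    (hsum : ∀ M : ℕ → ModuleCat.{u} R, (∀ n, X (M n)) →
      X (ModuleCat.of R (⨁ n, (M n : Type u)))) :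
    ∀ (N M : ModuleCat.{u} R) (i : M →ₗ[R] N) (r : N →ₗ[R] M),
      r ∘ₗ i = LinearMap.id → X N → X M := by
  intro N M i r hri hXN
  classical
  set e : N →ₗ[R] N := i ∘ₗ r with he
  have hee : ∀ x, e (e x) = e x := by
    intro x
    show i (r (i (r x))) = i (r x)
    rw [show r (i (r x)) = r x from congrArg (fun f : M →ₗ[R] M => f (r x)) hri]
  set q : N →ₗ[R] N := LinearMap.id - e with hq
  have hqe : ∀ x, q (e x) = 0 := by
    intro x
    show e x - e (e x) = 0
    rw [hee, sub_self]
  have heq : ∀ x, e (q x) = 0 := by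
    intro x
    show e (x - e x) = 0
    rw [map_sub, hee, sub_self]
  have hqq : ∀ x, q (q x) = q x := by
    intro x
    show q x - e (q x) = q x
    rw [heq, sub_zero]
  have hdecomp : ∀ x : N, q x + e x = x := by
    intro x
    show (x - e x) + e x = x
    rw [sub_add_cancel]
  have hri' : ∀ m, r (i m) = m := fun m =>
    congrArg (fun f : M →ₗ[R] M => f m) hri
  have hqi : ∀ m, q (i m) = 0 := by
    intro m
    show i m - i (r (i m)) = 0
    rw [hri' m, sub_self]
  -- the countable direct sum Y = ⊕ₙ N
  let Y : Type u := ⨁ _ : ℕ, N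
  let L : ∀ _ : ℕ, (N : Type u) →ₗ[R] Y := fun n => DirectSum.lof R ℕ (fun _ => N) n
  let C : ∀ _ : ℕ, Y →ₗ[R] (N : Type u) := fun n => DirectSum.component R ℕ (fun _ => N) n
  have hCL_self : ∀ (n : ℕ) (x : N), C n (L n x) = x := fun n x =>
    DirectSum.component.lof_self (R := R) (M := fun _ : ℕ => (N : Type u)) n x
  have hCL_ne : ∀ (m n : ℕ), n ≠ m → ∀ x : N, C m (L n x) = 0 := by
    intro m n h x
    have := DirectSum.component.of (R := R) (M := fun _ : ℕ => (N : Type u)) m n x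
    rwa [dif_neg h] at this
  -- the maps ι : M → Y and π : Y → Y
  let ι : (M : Type u) →ₗ[R] Y := L 0 ∘ₗ i
  let f : ∀ n : ℕ, (N : Type u) →ₗ[R] Y := fun n =>
    Nat.rec (L 0 ∘ₗ q) (fun m _ => L (m + 1) ∘ₗ q + L m ∘ₗ e) n
  let π : Y →ₗ[R] Y := DirectSum.toModule R ℕ Y f
  have hπL : ∀ (n : ℕ) (x : N), π (L n x) = f n x := by
    intro n x
    exact DirectSum.toModule_lof (R := R) (φ := f) n x
  -- ι is injective
  have hι_inj : Function.Injective ι := by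
    have h1 : Function.Injective i := by
      intro a b hab
      have := congrArg r hab
      rwa [hri' a, hri' b] at this
    have h2 : Function.Injective (L 0) := by
      intro a b hab
      have := congrArg (C 0) hab
      rwa [hCL_self, hCL_self] at this
    exact fun a b hab => h1 (h2 hab)
  -- π is surjective
  have hπ_surj : Function.Surjective π := by
    let σ : Y →ₗ[R] Y := DirectSum.toModule R ℕ Y (fun n => L n ∘ₗ q + L (n + 1) ∘ₗ e)
    have hcomps : π ∘ₗ σ = LinearMap.id := by
      apply DirectSum.linearMap_ext
      intro n
      ext x : 1
      simp only [LinearMap.comp_apply, LinearMap.id_apply]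
      have hσ : σ (L n x) = L n (q x) + L (n + 1) (e x) := by
        have := DirectSum.toModule_lof (R := R)
          (φ := fun n => L n ∘ₗ q + L (n + 1) ∘ₗ e) n x
        exact this
      rw [show (DirectSum.lof R ℕ (fun _ => (N : Type u)) n) x = L n x from rfl, hσ,
        map_add, hπL, hπL]
      cases n with
      | zero =>
        show L 0 (q (q x)) + (L 1 (q (e x)) + L 0 (e (e x))) = L 0 x
        rw [hqq, hqe, hee, map_zero, zero_add, ← map_add, hdecomp]
      | succ m =>
        show (L (m + 1) (q (q x)) + L m (e (q x))) +
            (L (m + 2) (q (e x)) + L (m + 1) (e (e x))) = L (m + 1) x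
        rw [hqq, heq, hqe, hee, map_zero, map_zero, add_zero, zero_add, ← map_add, hdecomp]
    intro y
    exact ⟨σ y, LinearMap.congr_fun hcomps y⟩
  -- components of π
  have hCπ : ∀ (m : ℕ) (y : Y), C m (π y) = q (C m y) + e (C (m + 1) y) := by
    intro m y
    have key : C m ∘ₗ π = q ∘ₗ C m + e ∘ₗ C (m + 1) := by
      apply DirectSum.linearMap_ext
      intro n
      ext x
      simp only [LinearMap.comp_apply, LinearMap.add_apply]
      rw [show (DirectSum.lof R ℕ (fun _ => (N : Type u)) n) x = L n x from rfl, hπL]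
      cases n with
      | zero =>
        show C m (L 0 (q x)) = q (C m (L 0 x)) + e (C (m + 1) (L 0 x))
        rw [hCL_ne (m + 1) 0 (by omega)]
        by_cases h : (0 : ℕ) = m
        · subst h
          rw [hCL_self, hCL_self]; simp
        · rw [hCL_ne m 0 h, hCL_ne m 0 h]; simp
      | succ k =>
        show C m (L (k + 1) (q x) + L k (e x)) =
            q (C m (L (k + 1) x)) + e (C (m + 1) (L (k + 1) x))
        rw [map_add]
        by_cases h1 : k + 1 = m
        · subst h1
          rw [hCL_self, hCL_self, hCL_ne (k + 1) k (by omega),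
            hCL_ne (k + 1 + 1) (k + 1) (by omega)]
          simp
        · by_cases h2 : k = m
          · subst h2
            rw [hCL_self, hCL_ne k (k + 1) (by omega), hCL_ne k (k + 1) (by omega),
              hCL_self]
            simp
          · rw [hCL_ne m (k + 1) h1, hCL_ne m k h2, hCL_ne m (k + 1) h1,
              hCL_ne (m + 1) (k + 1) (by omega)]
            simp
    exact LinearMap.congr_fun key y
  -- kernel of π = range of ι
  have hker : LinearMap.range ι = LinearMap.ker π := by
    apply le_antisymm
    · rintro _ ⟨m, rfl⟩
      simp only [LinearMap.mem_ker]
      show π (L 0 (i m)) = 0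
      rw [hπL]
      show L 0 (q (i m)) = 0
      rw [hqi, map_zero]
    · intro y hy
      rw [LinearMap.mem_ker] at hy
      have hcomp : ∀ m, q (C m y) + e (C (m + 1) y) = 0 := by
        intro m
        rw [← hCπ, hy, map_zero]
      have hqzero : ∀ m, q (C m y) = 0 := by
        intro m
        have := congrArg q (hcomp m)
        rwa [map_add, hqq, hqe, add_zero, map_zero] at this
      have hezero : ∀ m, e (C (m + 1) y) = 0 := by
        intro m
        have := hcomp m
        rwa [hqzero m, zero_add] at this
      have hzero : ∀ m, C (m + 1) y = 0 := by
        intro m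
        rw [← hdecomp (C (m + 1) y), hqzero (m + 1), hezero m, add_zero]
      refine ⟨r (C 0 y), ?_⟩
      have hy0 : i (r (C 0 y)) = C 0 y := by
        have h1 := hdecomp (C 0 y)
        rw [hqzero 0, zero_add] at h1
        exact h1
      show L 0 (i (r (C 0 y))) = y
      rw [hy0]
      apply DFinsupp.ext
      intro n
      cases n with
      | zero => exact hCL_self 0 (C 0 y)
      | succ k => exact (hCL_ne (k + 1) 0 (by omega) (C 0 y)).trans (hzero k).symm
  -- Y is in X, conclude
  have hXY : X (ModuleCat.of R Y) := hsum (fun _ => N) (fun _ => hXN)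
  exact (hres.2 M (ModuleCat.of R Y) (ModuleCat.of R Y) ι π hι_inj hπ_surj hker hXY).mpr hXY
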